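/- Let f(z) = 1/z + e^z and g(z) = 1/z + e^z/z = (1 + e^z)/z, meromorphic on ℂ. Then f − 1/z = e^z and g − 1/z = e^z/z have no zeros (so f and g share 1/z CM in the sense of vanishing), but 1/f − z = −z² e^z/(1 + z e^z) has a zero of order exactly 2 at z = 0, while 1/g − z = −z e^z/(1 + e^z) has a zero of order exactly 1 at z = 0; consequently 1/f and 1/g share the function z IM but not CM in the sense of vanishing. -/

import Mathlib

open Complex Topology
open scoped Classical

/-- The order of a meromorphic function at a point (junk value `0` if `f` is
not meromorphic at `z`).  Order `⊤` means `f ≡ 0` near `z`, a positive order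
is the multiplicity of a zero, a negative order is minus the multiplicity of
a pole. -/
noncomputable def morder (f : ℂ → ℂ) (z : ℂ) : WithTop ℤ :=
  if MeromorphicAt f z then meromorphicOrderAt f z else 0

/-- `f(z) = α(z)` in the sense of value: at a pole of `α` it means that `f`
also has a pole at `z`; elsewhere it means that the meromorphic function
`f - α` vanishes at `z`. -/
def ValueEqAt (f α : ℂ → ℂ) (z : ℂ) : Prop :=
  (morder α z < 0 ∧ morder f z < 0) ∨ (0 ≤ morder α z ∧ 0 < morder (f - α) z)

/-- `f` and `g` share the function `α` IM in the sense of value on `D`. -/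
def ShareIMValue (f g α : ℂ → ℂ) (D : Set ℂ) : Prop :=
  ∀ z ∈ D, (ValueEqAt f α z ↔ ValueEqAt g α z)

/-- `f` and `g` share the function `α` CM in the sense of value on `D`:
at points where `α` is finite the orders of the zeros of `f - α` and `g - α`
agree, and at poles of `α` the orders of the zeros of `1/f - 1/α` and
`1/g - 1/α` agree. -/
def ShareCMValue (f g α : ℂ → ℂ) (D : Set ℂ) : Prop :=
  ∀ z ∈ D,
    (0 ≤ morder α z → ∀ m : ℕ, 1 ≤ m →
      (morder (f - α) z = (m : ℤ) ↔ morder (g - α) z = (m : ℤ))) ∧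
    (morder α z < 0 → ∀ m : ℕ, 1 ≤ m →
      (morder (f⁻¹ - α⁻¹) z = (m : ℤ) ↔ morder (g⁻¹ - α⁻¹) z = (m : ℤ)))

/-- `f` and `g` share the function `α` IM in the sense of vanishing on `D`:
`f - α` and `g - α` have the same zeros (ignoring multiplicities). -/
def ShareIMVanishing (f g α : ℂ → ℂ) (D : Set ℂ) : Prop :=
  ∀ z ∈ D, (0 < morder (f - α) z ↔ 0 < morder (g - α) z)

/-- `f` and `g` share the function `α` CM in the sense of vanishing on `D`:
`f - α` and `g - α` have the same zeros with the same multiplicities. -/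
def ShareCMVanishing (f g α : ℂ → ℂ) (D : Set ℂ) : Prop :=
  ∀ z ∈ D, ∀ m : ℕ, 1 ≤ m →
    (morder (f - α) z = (m : ℤ) ↔ morder (g - α) z = (m : ℤ))

lemma morder_eq {f : ℂ → ℂ} {z : ℂ} (h : MeromorphicAt f z) : morder f z = meromorphicOrderAt f z := by
  unfold morder; exact if_pos h

lemma order_zero_of_ne {f : ℂ → ℂ} {z : ℂ} (hf : AnalyticAt ℂ f z) (h0 : f z ≠ 0) :
    morder f z = (0 : ℤ) := by
  rw [morder_eq hf.meromorphicAt, (meromorphicOrderAt_eq_int_iff (n := 0) hf.meromorphicAt)]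
  exact ⟨f, hf, h0, by filter_upwards with w; simp⟩

lemma entire_not_ev_zero {u : ℂ → ℂ} (hu : ∀ w, AnalyticAt ℂ u w) {c : ℂ} (hc : u c ≠ 0)
    (z : ℂ) : ¬ ∀ᶠ w in 𝓝 z, u w = 0 := by
  intro h
  have : Set.EqOn u 0 Set.univ :=
    AnalyticOnNhd.eqOn_zero_of_preconnected_of_eventuallyEq_zero (fun w _ => hu w)
      isPreconnected_univ (Set.mem_univ z) h
  exact hc (this (Set.mem_univ c))

lemma order_neg_nat {u N F : ℂ → ℂ} {z : ℂ} (hu : AnalyticAt ℂ u z)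
    (hN : AnalyticAt ℂ N z) (hNz : N z ≠ 0)
    (hu0 : ¬ ∀ᶠ w in 𝓝 z, u w = 0) (hF : MeromorphicAt F z)
    (heq : ∀ᶠ w in 𝓝[≠] z, F w = N w / u w) :
    ∃ k : ℕ, meromorphicOrderAt F z = ((-(k : ℤ) : ℤ) : WithTop ℤ) := by
  have hord : analyticOrderAt u z ≠ ⊤ := fun h => hu0 (analyticOrderAt_eq_top.mp h)
  obtain ⟨k, hk⟩ := ENat.ne_top_iff_exists.mp hord
  obtain ⟨v, hv, hvz, hveq⟩ := (hu.analyticOrderAt_eq_natCast (n := k)).mp hk.symm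
  refine ⟨k, (meromorphicOrderAt_eq_int_iff hF).mpr ⟨fun w => N w / v w, hN.div hv hvz, ?_, ?_⟩⟩
  · simpa using ⟨hNz, hvz⟩
  · filter_upwards [heq, hveq.filter_mono nhdsWithin_le_nhds] with w h1 h2
    rw [h1, h2]
    simp only [smul_eq_mul, Pi.smul_apply', Pi.pow_apply, smul_eq_mul]
    rw [div_mul_eq_div_div_swap, zpow_neg, zpow_natCast]
    rw [mul_comm]
    field_simp

/-- Example 4: `f = 1/z + e^z` and `g = 1/z + e^z/z` share
`1/z` CM in the sense of vanishing, but `1/f - z` has a zero of order exactly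
`2` at `0` while `1/g - z` has a zero of order exactly `1` there; hence `1/f`
and `1/g` share the function `z` IM but not CM in the sense of vanishing. -/
theorem example_four (f g α : ℂ → ℂ)
    (hfdef : f = fun z => z⁻¹ + exp z)
    (hgdef : g = fun z => z⁻¹ + exp z / z)
    (hαdef : α = fun z => z⁻¹) :
    (∀ z, f z - α z = exp z) ∧
    (∀ z, g z - α z = exp z / z) ∧
    (∀ z, ¬ 0 < morder (f - α) z) ∧
    (∀ z, ¬ 0 < morder (g - α) z) ∧
    ShareCMVanishing f g α Set.univ ∧
    (∀ᶠ z in 𝓝[≠] (0 : ℂ), (f z)⁻¹ - z = -(z ^ 2 * exp z) / (1 + z * exp z)) ∧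
    morder (f⁻¹ - α⁻¹) 0 = (2 : ℤ) ∧
    (∀ᶠ z in 𝓝[≠] (0 : ℂ), (g z)⁻¹ - z = -(z * exp z) / (1 + exp z)) ∧
    morder (g⁻¹ - α⁻¹) 0 = (1 : ℤ) ∧
    ShareIMVanishing f⁻¹ g⁻¹ α⁻¹ Set.univ ∧
    ¬ ShareCMVanishing f⁻¹ g⁻¹ α⁻¹ Set.univ := by
  subst hfdef hgdef hαdef
  set f : ℂ → ℂ := fun z => z⁻¹ + exp z with hf
  set g : ℂ → ℂ := fun z => z⁻¹ + exp z / z with hg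
  set α : ℂ → ℂ := fun z => z⁻¹ with hα
  have hu1 : ∀ z, AnalyticAt ℂ (fun w : ℂ => 1 + w * exp w) z := fun z =>
    analyticAt_const.add (analyticAt_id.mul analyticAt_cexp)
  have hu2 : ∀ z, AnalyticAt ℂ (fun w : ℂ => 1 + exp w) z := fun z =>
    analyticAt_const.add analyticAt_cexp
  have hu1ne : ∀ z, ¬ ∀ᶠ w in 𝓝 z, (fun w : ℂ => 1 + w * exp w) w = 0 :=
    entire_not_ev_zero hu1 (c := 0) (by simp)
  have hu2ne : ∀ z, ¬ ∀ᶠ w in 𝓝 z, (fun w : ℂ => 1 + exp w) w = 0 :=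
    entire_not_ev_zero hu2 (c := 0) (by norm_num [Complex.exp_zero])
  have hαm : ∀ z, MeromorphicAt α z := fun z => (MeromorphicAt.id z).inv
  have hfm : ∀ z, MeromorphicAt f z := fun z => (hαm z).add analyticAt_cexp.meromorphicAt
  have hgm : ∀ z, MeromorphicAt g z := fun z =>
    (hαm z).add (analyticAt_cexp.meromorphicAt.div (MeromorphicAt.id z))
  have hFm : ∀ z, MeromorphicAt (f⁻¹ - α⁻¹) z := fun z => (hfm z).inv.sub (hαm z).inv
  have hGm : ∀ z, MeromorphicAt (g⁻¹ - α⁻¹) z := fun z => (hgm z).inv.sub (hαm z).inv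
  have p1 : ∀ z, f z - α z = exp z := fun z => add_sub_cancel_left _ _
  have p2 : ∀ z, g z - α z = exp z / z := fun z => add_sub_cancel_left _ _
  have hfα : f - α = exp := funext fun z => p1 z
  have ord_fα : ∀ z, morder (f - α) z = (0 : ℤ) := fun z => by
    rw [hfα]; exact order_zero_of_ne analyticAt_cexp (exp_ne_zero z)
  have p3 : ∀ z, ¬ 0 < morder (f - α) z := fun z => by
    rw [ord_fα z, ← WithTop.coe_zero, WithTop.coe_lt_coe]; omega
  have ord_gα : ∀ z, ∃ k : ℕ, morder (g - α) z = ((-(k : ℤ) : ℤ) : WithTop ℤ) := by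
    intro z
    have hm : MeromorphicAt (g - α) z := (hgm z).sub (hαm z)
    rw [morder_eq hm]
    refine order_neg_nat (u := id) analyticAt_id analyticAt_cexp (exp_ne_zero z)
      (entire_not_ev_zero (fun _ => analyticAt_id) (c := 1) one_ne_zero z) hm ?_
    filter_upwards with w
    rw [Pi.sub_apply, p2 w]
    rfl
  have p4 : ∀ z, ¬ 0 < morder (g - α) z := by
    intro z
    obtain ⟨k, hk⟩ := ord_gα z
    rw [hk, ← WithTop.coe_zero, WithTop.coe_lt_coe]; omega
  have p5 : ShareCMVanishing f g α Set.univ := by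
    intro z _ m hm
    obtain ⟨k, hk⟩ := ord_gα z
    rw [ord_fα z, hk]
    constructor
    · intro h; exact absurd (WithTop.coe_eq_coe.mp h) (by omega)
    · intro h; exact absurd (WithTop.coe_eq_coe.mp h) (by omega)
  have hden1 : ∀ᶠ z in 𝓝 (0:ℂ), 1 + z * exp z ≠ 0 := by
    apply ContinuousAt.eventually_ne (by fun_prop)
    show (1:ℂ) + 0 * exp 0 ≠ 0
    simp
  have hden2 : ∀ᶠ z in 𝓝 (0:ℂ), 1 + exp z ≠ 0 := by
    apply ContinuousAt.eventually_ne (by fun_prop)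
    show (1:ℂ) + exp 0 ≠ 0
    rw [Complex.exp_zero]; norm_num
  have p6 : ∀ᶠ z in 𝓝[≠] (0 : ℂ), (f z)⁻¹ - z = -(z ^ 2 * exp z) / (1 + z * exp z) := by
    filter_upwards [hden1.filter_mono nhdsWithin_le_nhds, self_mem_nhdsWithin] with z h1 h2
    have hz : z ≠ 0 := h2
    have hfz : f z = (1 + z * exp z) / z := by
      simp only [hf]; field_simp
    rw [hfz, inv_div]
    field_simp
    ring
  have p8 : ∀ᶠ z in 𝓝[≠] (0 : ℂ), (g z)⁻¹ - z = -(z * exp z) / (1 + exp z) := by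
    filter_upwards [hden2.filter_mono nhdsWithin_le_nhds, self_mem_nhdsWithin] with z h1 h2
    have hz : z ≠ 0 := h2
    have hgz : g z = (1 + exp z) / z := by
      simp only [hg]; field_simp
    rw [hgz, inv_div]
    field_simp
    ring
  have p7 : morder (f⁻¹ - α⁻¹) 0 = (2 : ℤ) := by
    rw [morder_eq (hFm 0), meromorphicOrderAt_eq_int_iff (hFm 0)]
    refine ⟨fun w => -(exp w) / (1 + w * exp w), ?_, by simp, ?_⟩
    · exact (analyticAt_cexp.neg).div (hu1 0) (by simp)
    · filter_upwards [p6, hden1.filter_mono nhdsWithin_le_nhds] with w h1 h2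
      have hw : (f⁻¹ - α⁻¹) w = (f w)⁻¹ - w := by
        simp [hα]
      rw [hw, h1]
      simp only [sub_zero, smul_eq_mul]
      rw [zpow_two, ← mul_div_assoc]
      ring
  have p9 : morder (g⁻¹ - α⁻¹) 0 = (1 : ℤ) := by
    rw [morder_eq (hGm 0), meromorphicOrderAt_eq_int_iff (hGm 0)]
    refine ⟨fun w => -(exp w) / (1 + exp w), ?_, ?_, ?_⟩
    · exact (analyticAt_cexp.neg).div (hu2 0) (by rw [Complex.exp_zero]; norm_num)
    · show -(exp 0) / (1 + exp 0) ≠ 0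
      rw [Complex.exp_zero]; norm_num
    · filter_upwards [p8, hden2.filter_mono nhdsWithin_le_nhds] with w h1 h2
      have hw : (g⁻¹ - α⁻¹) w = (g w)⁻¹ - w := by
        simp [hα]
      rw [hw, h1]
      simp only [sub_zero, smul_eq_mul]
      rw [zpow_one, ← mul_div_assoc]
      ring
  have ordF : ∀ z : ℂ, z ≠ 0 → ∃ k : ℕ, morder (f⁻¹ - α⁻¹) z = ((-(k : ℤ) : ℤ) : WithTop ℤ) := by
    intro z hz
    rw [morder_eq (hFm z)]
    have hune : ∀ᶠ w in 𝓝[≠] z, (1 : ℂ) + w * exp w ≠ 0 := by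
      rcases (hu1 z).eventually_eq_zero_or_eventually_ne_zero with h | h
      · exact absurd h (hu1ne z)
      · exact h
    refine order_neg_nat (u := fun w => 1 + w * exp w) (hu1 z)
      (N := fun w => -(w ^ 2 * exp w))
      (((analyticAt_id.pow 2).mul analyticAt_cexp).neg)
      (by simp [hz, Complex.exp_ne_zero])
      (hu1ne z) (hFm z) ?_
    filter_upwards [hune, (eventually_ne_nhds hz).filter_mono nhdsWithin_le_nhds]
      with w h1 h2
    have hw : (f⁻¹ - α⁻¹) w = (f w)⁻¹ - w := by
      simp [hα]
    rw [hw]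
    have hfz : f w = (1 + w * exp w) / w := by
      simp only [hf]; field_simp
    rw [hfz, inv_div]
    field_simp
    ring
  have ordG : ∀ z : ℂ, z ≠ 0 → ∃ k : ℕ, morder (g⁻¹ - α⁻¹) z = ((-(k : ℤ) : ℤ) : WithTop ℤ) := by
    intro z hz
    rw [morder_eq (hGm z)]
    have hune : ∀ᶠ w in 𝓝[≠] z, (1 : ℂ) + exp w ≠ 0 := by
      rcases (hu2 z).eventually_eq_zero_or_eventually_ne_zero with h | h
      · exact absurd h (hu2ne z)
      · exact h
    refine order_neg_nat (u := fun w => 1 + exp w) (hu2 z)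
      (N := fun w => -(w * exp w))
      ((analyticAt_id.mul analyticAt_cexp).neg)
      (by simp [hz, Complex.exp_ne_zero])
      (hu2ne z) (hGm z) ?_
    filter_upwards [hune, (eventually_ne_nhds hz).filter_mono nhdsWithin_le_nhds]
      with w h1 h2
    have hw : (g⁻¹ - α⁻¹) w = (g w)⁻¹ - w := by
      simp [hα]
    rw [hw]
    have hgz : g w = (1 + exp w) / w := by
      simp only [hg]; field_simp
    rw [hgz, inv_div]
    field_simp
    ring
  have p10 : ShareIMVanishing f⁻¹ g⁻¹ α⁻¹ Set.univ := by
    intro z _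
    rcases eq_or_ne z 0 with rfl | hz
    · rw [p7, p9]
      constructor <;> intro _ <;>
        · rw [← WithTop.coe_zero, WithTop.coe_lt_coe]; omega
    · obtain ⟨k, hk⟩ := ordF z hz
      obtain ⟨l, hl⟩ := ordG z hz
      rw [hk, hl]
      constructor <;> intro h <;>
        · exfalso
          rw [← WithTop.coe_zero, WithTop.coe_lt_coe] at h; omega
  have p11 : ¬ ShareCMVanishing f⁻¹ g⁻¹ α⁻¹ Set.univ := by
    intro h
    have h2 := ((h 0 (Set.mem_univ 0) 2 (by omega)).mp (by exact_mod_cast p7))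
    rw [p9] at h2
    exact absurd (WithTop.coe_eq_coe.mp h2) (by omega)
  exact ⟨p1, p2, p3, p4, p5, p6, p7, p8, p9, p10, p11⟩
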